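/- arXiv:math/0609648 — 2 statements merged into one kernel-verified Lean document; each statement's English description precedes it below -/
import Mathlib

section
/- Let n ≥ 2, let ω_{n-1} be the (n-1)-dimensional measure of the unit sphere in ℝ^n, and set c_n = (ω_{n-1}/n)^{1/(n-1)}. Define w(x) = -n·log(1 + c_n·|x|^{n/(n-1)}). Then ∫_{ℝ^n} e^{w(x)} dx = 1. -/
open MeasureTheory
open Real Set

private lemma aux_1d (n : ℕ) (hn : 2 ≤ n) (c ω : ℝ) (hω : 0 < ω) (hcn : c ^ (n - 1 : ℕ) = ω / n)
    (hc : 0 < c) :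
    ∫ y in Ioi (0:ℝ), y ^ (n - 1 : ℕ) * (1 + c * y ^ ((n:ℝ)/((n:ℝ)-1))) ^ (-(n:ℝ)) = ω⁻¹ := by
  have hn1 : (0:ℝ) < (n:ℝ) - 1 := by
    have : (2:ℝ) ≤ n := by exact_mod_cast hn
    linarith
  set p : ℝ := (n:ℝ)/((n:ℝ)-1) with hpdef
  have hp : 0 < p := div_pos (by linarith) hn1
  have hpn : p * ((n:ℝ)-1) = n := div_mul_cancel₀ _ hn1.ne'
  set F : ℝ → ℝ := fun y => ω⁻¹ * (c * y ^ p / (1 + c * y ^ p)) ^ (n - 1 : ℕ) with hF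
  set g' : ℝ → ℝ := fun y => y ^ (n - 1 : ℕ) * (1 + c * y ^ p) ^ (-(n:ℝ)) with hg'
  have hderiv : ∀ y ∈ Ioi (0:ℝ), HasDerivAt F (g' y) y := by
    intro y hy
    have hy0 : 0 < y := hy
    have hu : 0 < c * y ^ p := mul_pos hc (rpow_pos_of_pos hy0 _)
    have h1u : 0 < 1 + c * y ^ p := by linarith
    have hyd : HasDerivAt (fun y : ℝ => y ^ p) (p * y ^ (p - 1)) y :=
      Real.hasDerivAt_rpow_const (Or.inl hy0.ne')
    have hud : HasDerivAt (fun y : ℝ => c * y ^ p) (c * (p * y ^ (p - 1))) y := hyd.const_mul c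
    have hqd : HasDerivAt (fun y : ℝ => c * y ^ p / (1 + c * y ^ p))
        ((c * (p * y ^ (p-1)) * (1 + c * y ^ p) - c * y ^ p * (c * (p * y ^ (p-1)))) /
          (1 + c * y ^ p) ^ 2) y :=
      hud.div (hud.const_add 1) h1u.ne'
    have hFd := ((hqd.pow (n-1)).const_mul ω⁻¹)
    refine hFd.congr_deriv (Eq.symm ?_)
    -- show g' y = the derivative expression
    have e1 : (c * (p * y ^ (p-1)) * (1 + c * y ^ p) - c * y ^ p * (c * (p * y ^ (p-1))))
        = c * p * y ^ (p-1) := by ring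
    rw [e1]
    have e2 : (c * y ^ p / (1 + c * y ^ p)) ^ (n - 1 - 1 : ℕ)
        = (c * y ^ p) ^ (n - 2 : ℕ) / (1 + c * y ^ p) ^ (n - 2 : ℕ) := by
      rw [div_pow]; congr 2 <;> omega
    rw [e2]
    have e3 : ((y : ℝ) ^ p) ^ (n - 2 : ℕ) = y ^ (p * ((n:ℝ) - 2)) := by
      rw [← Real.rpow_natCast (y ^ p) (n-2), ← Real.rpow_mul hy0.le]
      congr 1
      push_cast [Nat.cast_sub hn]
      ring
    have e4 : (1 + c * y ^ p) ^ (-(n:ℝ)) = ((1 + c * y ^ p) ^ (n : ℕ))⁻¹ := by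
      rw [Real.rpow_neg h1u.le, Real.rpow_natCast]
    have e5 : (y : ℝ) ^ (n - 1 : ℕ) = y ^ ((n:ℝ) - 1) := by
      rw [← Real.rpow_natCast y (n-1), Nat.cast_sub (by omega)]
      norm_num
    have e6 : y ^ (p * ((n:ℝ)-2)) * y ^ (p - 1) = y ^ ((n:ℝ) - 1) := by
      rw [← Real.rpow_add hy0]
      congr 1
      nlinarith [hpn]
    have e7 : (1 + c * y ^ p) ^ (n - 2 : ℕ) * (1 + c * y ^ p) ^ 2 = (1 + c * y ^ p) ^ (n : ℕ) := by
      rw [← pow_add]; congr 1; omega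
    have e8 : (↑(n-1) : ℝ) = (n:ℝ) - 1 := by push_cast [Nat.cast_sub (by omega : 1 ≤ n)]; ring
    have e9 : c ^ (n - 2 : ℕ) * c = c ^ (n - 1 : ℕ) := by
      rw [← pow_succ]; congr 1; omega
    show y ^ (n-1:ℕ) * (1 + c*y^p) ^ (-(n:ℝ)) = _
    rw [e4, e5, mul_pow, e3]
    field_simp
    rw [e8]
    have hn0 : (n:ℝ) ≠ 0 := by positivity
    have hnω : (n:ℝ) * (ω / n) = ω := by rw [mul_comm]; exact div_mul_cancel₀ ω hn0
    have e10 : c * (1 + c * y ^ p) ^ n * ((n:ℝ) - 1) * c ^ (n - 2) * p * y ^ (p * ((n:ℝ) - 2)) * y ^ (p - 1)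
        = (1 + c * y ^ p) ^ n * (p * ((n:ℝ) - 1)) * (c ^ (n - 2 : ℕ) * c)
          * (y ^ (p * ((n:ℝ) - 2)) * y ^ (p - 1)) := by ring
    rw [e10, hpn, e9, hcn, e6, ← e7]
    linear_combination (-((1 + c * y ^ p) ^ (n - 2) * (1 + c * y ^ p) ^ 2 * y ^ ((n:ℝ) - 1))) * hnω
  have hcont : ContinuousWithinAt F (Ici 0) 0 := by
    have h1 : ContinuousAt (fun y : ℝ => y ^ p) 0 :=
      Real.continuousAt_rpow_const 0 p (Or.inr hp.le)
    have h2 : ContinuousAt (fun y : ℝ => c * y ^ p) 0 := continuousAt_const.mul h1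
    have hne : (1 : ℝ) + c * (0:ℝ) ^ p ≠ 0 := by
      simp [Real.zero_rpow hp.ne']
    have : ContinuousAt F 0 := ContinuousAt.mul continuousAt_const
      ((h2.div (continuousAt_const.add h2) hne).pow _)
    exact this.continuousWithinAt
  have hpos : ∀ y ∈ Ioi (0:ℝ), 0 ≤ g' y := by
    intro y hy
    have hy0 : (0:ℝ) < y := hy
    have : (0:ℝ) ≤ 1 + c * y ^ p := by positivity
    exact mul_nonneg (pow_nonneg hy0.le _) (Real.rpow_nonneg this _)
  have hlim : Filter.Tendsto F Filter.atTop (nhds ω⁻¹) := by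
    have hu : Filter.Tendsto (fun y : ℝ => c * y ^ p) Filter.atTop Filter.atTop :=
      (tendsto_rpow_atTop hp).const_mul_atTop hc
    have h1u : Filter.Tendsto (fun y : ℝ => 1 + c * y ^ p) Filter.atTop Filter.atTop :=
      Filter.tendsto_atTop_add_const_left _ 1 hu
    have hinv : Filter.Tendsto (fun y : ℝ => (1 + c * y ^ p)⁻¹) Filter.atTop (nhds 0) :=
      h1u.inv_tendsto_atTop
    have hq : Filter.Tendsto (fun y : ℝ => c * y ^ p / (1 + c * y ^ p)) Filter.atTop (nhds 1) := by
      have heq : ∀ᶠ y : ℝ in Filter.atTop,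
          1 - (1 + c * y ^ p)⁻¹ = c * y ^ p / (1 + c * y ^ p) := by
        filter_upwards [Filter.eventually_gt_atTop (0:ℝ)] with y hy
        have h1up : (0:ℝ) < 1 + c * y ^ p := by positivity
        field_simp
        ring
      have h2 : Filter.Tendsto (fun y : ℝ => 1 - (1 + c * y ^ p)⁻¹) Filter.atTop
          (nhds (1 - 0)) := tendsto_const_nhds.sub hinv
      rw [sub_zero] at h2
      exact h2.congr' heq
    have := (hq.pow (n-1)).const_mul ω⁻¹
    simpa using this
  have key := integral_Ioi_of_hasDerivAt_of_nonneg hcont hderiv hpos hlim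
  have hF0 : F 0 = 0 := by
    simp [hF, Real.zero_rpow hp.ne', zero_pow (by omega : n - 1 ≠ 0)]
  rw [hF0, sub_zero] at key
  exact key

theorem stmt_7 (n : ℕ) (hn : 2 ≤ n)
    (ω : ℝ) (hω : ω = n * (volume (Metric.ball (0 : EuclideanSpace ℝ (Fin n)) 1)).toReal)
    (c : ℝ) (hc : c = (ω / n) ^ ((1 : ℝ) / ((n : ℝ) - 1))) :
    ∫ x : EuclideanSpace ℝ (Fin n),
        Real.exp (-(n : ℝ) * Real.log (1 + c * ‖x‖ ^ ((n : ℝ) / ((n : ℝ) - 1)))) = 1 := by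
  haveI : Nonempty (Fin n) := ⟨⟨0, by omega⟩⟩
  haveI : Nontrivial (EuclideanSpace ℝ (Fin n)) := inferInstance
  have hn1 : (0:ℝ) < (n:ℝ) - 1 := by
    have : (2:ℝ) ≤ n := by exact_mod_cast hn
    linarith
  have hnpos : (0:ℝ) < n := by linarith
  set p : ℝ := (n:ℝ)/((n:ℝ)-1) with hpdef
  have hVpos : (0:ℝ) < (volume (Metric.ball (0 : EuclideanSpace ℝ (Fin n)) 1)).toReal :=
    ENNReal.toReal_pos (Metric.measure_ball_pos volume _ one_pos).ne' measure_ball_lt_top.ne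
  have hωpos : 0 < ω := by rw [hω]; exact mul_pos hnpos hVpos
  have hcpos : 0 < c := by
    rw [hc]; exact Real.rpow_pos_of_pos (div_pos hωpos hnpos) _
  have hcn : c ^ (n - 1 : ℕ) = ω / n := by
    rw [hc, ← Real.rpow_natCast _ (n-1), ← Real.rpow_mul (div_pos hωpos hnpos).le]
    have : (1:ℝ)/((n:ℝ)-1) * ((n-1:ℕ):ℝ) = 1 := by
      rw [Nat.cast_sub (by omega : 1 ≤ n)]
      push_cast
      field_simp
    rw [this, Real.rpow_one]
  have hint : (fun x : EuclideanSpace ℝ (Fin n) =>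
      Real.exp (-(n : ℝ) * Real.log (1 + c * ‖x‖ ^ p)))
      = fun x => (fun r : ℝ => (1 + c * r ^ p) ^ (-(n:ℝ))) ‖x‖ := by
    funext x
    have ht : (0:ℝ) < 1 + c * ‖x‖ ^ p := by positivity
    show _ = (1 + c * ‖x‖ ^ p) ^ (-(n:ℝ))
    rw [Real.rpow_def_of_pos ht, mul_comm]
  rw [hint, MeasureTheory.integral_fun_norm_addHaar volume
      (fun r : ℝ => (1 + c * r ^ p) ^ (-(n:ℝ)))]
  rw [finrank_euclideanSpace_fin]
  have h1d := aux_1d n hn c ω hωpos hcn hcpos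
  simp only [smul_eq_mul, nsmul_eq_mul]
  rw [show (∫ y in Ioi (0:ℝ), y ^ (n - 1 : ℕ) * (1 + c * y ^ p) ^ (-(n:ℝ))) = ω⁻¹ from h1d]
  rw [hω]
  field_simp
  rfl
end

section
/- Let n ≥ 2 and suppose w : ℝ^n → ℝ is a radially symmetric C^1 solution of the n-Laplace equation -div(|∇w|^{n-2}∇w) = (n·α_n/(n-1))^{n-1}·e^w on ℝ^n with w(0) = 0 = max w, where α_n = n·ω_{n-1}^{1/(n-1)}. Then w(x) = -n·log(1 + c_n·|x|^{n/(n-1)}) with c_n = (ω_{n-1}/n)^{1/(n-1)}. -/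
open MeasureTheory Set Filter Topology intervalIntegral

lemma rpow_lip {p m x y : ℝ} (hp : 0 < p) (hp1 : p ≤ 1) (hm : 0 < m) (hx : m ≤ x) (hy : m ≤ y) :
    |x ^ p - y ^ p| ≤ p * m ^ (p - 1) * |x - y| := by
  have hd : ∀ t ∈ Ici m, HasDerivWithinAt (fun t : ℝ => t ^ p) (p * t ^ (p - 1)) (Ici m) t := by
    intro t ht
    exact (Real.hasDerivAt_rpow_const (Or.inl (lt_of_lt_of_le hm ht).ne')).hasDerivWithinAt
  have hb : ∀ t ∈ Ici m, ‖p * t ^ (p - 1)‖ ≤ p * m ^ (p - 1) := by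
    intro t ht
    have h1 : t ^ (p - 1) ≤ m ^ (p - 1) :=
      Real.rpow_le_rpow_of_nonpos hm ht (by linarith : p - 1 ≤ 0)
    have h2 : (0:ℝ) ≤ t ^ (p - 1) := Real.rpow_nonneg (le_trans hm.le ht) _
    rw [Real.norm_eq_abs, abs_of_nonneg (by positivity)]
    exact mul_le_mul_of_nonneg_left h1 hp.le
  have key := Convex.norm_image_sub_le_of_norm_hasDerivWithin_le hd hb (convex_Ici m) hy hx
  simpa [Real.norm_eq_abs] using key

lemma exp_lip {x y : ℝ} (hx : x ≤ 0) (hy : y ≤ 0) :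
    |Real.exp x - Real.exp y| ≤ |x - y| := by
  have hb : ∀ t ∈ Iic (0:ℝ), ‖Real.exp t‖ ≤ 1 := by
    intro t ht
    rw [Real.norm_eq_abs, abs_of_pos (Real.exp_pos t)]
    exact Real.exp_le_one_iff.mpr ht
  have key := Convex.norm_image_sub_le_of_norm_hasDerivWithin_le
    (fun t _ => (Real.hasDerivAt_exp t).hasDerivWithinAt) hb (convex_Iic 0) hy hx
  simpa [Real.norm_eq_abs] using key

set_option maxHeartbeats 1000000 in
theorem stmt_19 (n : ℕ) (hn : 2 ≤ n) (ω α c : ℝ)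
    (hω : ω = n * (volume (Metric.ball (0 : EuclideanSpace ℝ (Fin n)) 1)).toReal)
    (hα : α = n * ω ^ ((1 : ℝ) / ((n : ℝ) - 1)))
    (hc : c = (ω / n) ^ ((1 : ℝ) / ((n : ℝ) - 1)))
    (w : EuclideanSpace ℝ (Fin n) → ℝ) (f f' : ℝ → ℝ)
    (hw : ∀ x, w x = f ‖x‖)
    (hC1 : ContDiff ℝ 1 w)
    (hfc : ContinuousOn f (Set.Ici 0))
    (hf' : ∀ r : ℝ, 0 < r → HasDerivAt f (f' r) r)
    (hode : ∀ r : ℝ, 0 < r →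
      HasDerivAt (fun s => s ^ (n - 1) * |f' s| ^ (n - 2) * f' s)
        (-(r ^ (n - 1) * ((n * α) / ((n : ℝ) - 1)) ^ (n - 1) * Real.exp (f r))) r)
    (h0 : f 0 = 0) (hmax : ∀ x, w x ≤ 0) :
    ∀ x, w x = -(n : ℝ) * Real.log (1 + c * ‖x‖ ^ ((n : ℝ) / ((n : ℝ) - 1))) := by
  obtain ⟨k, rfl⟩ : ∃ k, n = k + 2 := ⟨n - 2, by omega⟩
  have e1 : k + 2 - 1 = k + 1 := by omega
  have e2 : k + 2 - 2 = k := by omega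
  rw [e1, e2] at hode
  have hNcast : ((k + 2 : ℕ) : ℝ) = (k:ℝ) + 2 := by push_cast; ring
  set N : ℝ := (k:ℝ) + 2 with hN
  have hN1 : (0:ℝ) < (k:ℝ) + 1 := by positivity
  have hN0 : (0:ℝ) < N := by rw [hN]; positivity
  set p : ℝ := 1 / ((k:ℝ) + 1) with hp
  set q : ℝ := N / ((k:ℝ) + 1) with hq
  set K : ℝ := (N * α) / ((k:ℝ) + 1) with hK
  have hp0 : 0 < p := by rw [hp]; positivity
  have hp1 : p ≤ 1 := by
    rw [hp, div_le_one hN1]; linarith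
  have hq0 : 0 < q := by rw [hq]; positivity
  have hq1 : 1 ≤ q := by
    rw [hq, le_div_iff₀ hN1, hN]; linarith
  have hqp : q - 1 = p := by rw [hq, hp, hN]; field_simp; ring
  have hqnp : N * p = q := by rw [hq, hp]; field_simp
  have hkp : ((k + 1 : ℕ) : ℝ) * p = 1 := by
    push_cast; rw [hp]; field_simp
  have hω0 : 0 < ω := by
    rw [hω]
    have h1 := Metric.measure_ball_pos volume (0 : EuclideanSpace ℝ (Fin (k+2))) one_pos
    have h2 : volume (Metric.ball (0 : EuclideanSpace ℝ (Fin (k+2))) 1) ≠ ⊤ :=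
      measure_ball_lt_top.ne
    have h3 : 0 < (volume (Metric.ball (0 : EuclideanSpace ℝ (Fin (k+2))) 1)).toReal :=
      ENNReal.toReal_pos h1.ne' h2
    positivity
  have hα0 : 0 < α := by
    rw [hα, hNcast]
    have h1 : (0:ℝ) < ω ^ ((1:ℝ) / (N - 1)) := Real.rpow_pos_of_pos hω0 _
    positivity
  have hK0 : 0 < K := by rw [hK]; positivity
  have hc0 : 0 < c := by
    rw [hc]
    exact Real.rpow_pos_of_pos (by positivity) _
  -- constants identity: K = N * c * q * N ^ p ... we need K / N^p = N * c * q
  have hexp1 : (1:ℝ) / (((k:ℝ)+2) - 1) = p := by rw [hp]; congr 1; ring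
  have hαp : α = N * ω ^ p := by
    rw [hα, hNcast, hN, hexp1]
  have hcp : c = ω ^ p / N ^ p := by
    rw [hc, hNcast, hN, hexp1, ← hN, Real.div_rpow hω0.le hN0.le]
  have hNp0 : (0:ℝ) < N ^ p := Real.rpow_pos_of_pos hN0 _
  have hconst : K = N * c * q * N ^ p := by
    rw [hK, hαp, hcp, hq]
    field_simp
  -- rewrite hode with K
  have hodeK : ∀ r : ℝ, 0 < r →
      HasDerivAt (fun s => s ^ (k+1) * |f' s| ^ k * f' s)
        (-(r ^ (k+1) * K ^ (k+1) * Real.exp (f r))) r := by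
    intro r hr
    have h := hode r hr
    have heq : ((((k:ℝ)+2) * α) / (((k:ℝ)+2) - 1)) = K := by
      rw [hK, hN]
      congr 1
      ring
    rw [hNcast, hN] at h
    rw [← heq]
    convert h using 4 <;> push_cast <;> ring
  -- the direction in euclidean space
  set e₀ : EuclideanSpace ℝ (Fin (k+2)) := EuclideanSpace.single 0 1 with he₀
  have he : ‖e₀‖ = 1 := by rw [he₀, EuclideanSpace.norm_single]; norm_num
  have hwf : ∀ t : ℝ, 0 ≤ t → w (t • e₀) = f t := by
    intro t ht
    rw [hw]
    congr 1
    rw [norm_smul, he, Real.norm_eq_abs, abs_of_nonneg ht, mul_one]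
  set φ : ℝ → ℝ := fun t => w (t • e₀) with hφdef
  have hφ : ContDiff ℝ 1 φ := hC1.comp (contDiff_id.smul contDiff_const)
  set D : ℝ → ℝ := deriv φ with hDdef
  have hDc : Continuous D := hφ.continuous_deriv le_rfl
  have hφ0 : φ 0 = 0 := by
    rw [hφdef]; simp only [zero_smul]
    rw [hw]; simp [h0]
  have hD0 : D 0 = 0 := by
    have hloc : IsLocalMax φ 0 := by
      apply Filter.Eventually.of_forall
      intro t
      rw [hφ0]
      exact hmax _
    exact hloc.deriv_eq_zero
  have hDf' : ∀ t : ℝ, 0 < t → D t = f' t := by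
    intro t ht
    have hev : φ =ᶠ[nhds t] f := by
      filter_upwards [Ioi_mem_nhds ht] with s hs
      exact hwf s (le_of_lt hs)
    rw [hDdef]
    rw [hev.deriv_eq]
    exact (hf' t ht).deriv
  have hfD : ∀ t : ℝ, 0 < t → HasDerivAt f (D t) t := by
    intro t ht
    rw [hDf' t ht]
    exact hf' t ht
  have hfle : ∀ r : ℝ, 0 ≤ r → f r ≤ 0 := by
    intro r hr
    rw [← hwf r hr]
    exact hmax _
  -- integrand for f
  set I1 : ℝ → ℝ := fun t => t ^ (k+1) * Real.exp (f t) with hI1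
  have hI1c : ContinuousOn I1 (Ici 0) :=
    (continuous_pow _).continuousOn.mul (Real.continuous_exp.comp_continuousOn hfc)
  have hI1int : ∀ a b : ℝ, 0 ≤ a → 0 ≤ b → IntervalIntegrable I1 volume a b := by
    intro a b ha hb
    apply (hI1c.mono ?_).intervalIntegrable
    intro x hx
    rcases Set.mem_uIcc.mp hx with h | h
    · exact le_trans ha h.1
    · exact le_trans hb h.1
  set G : ℝ → ℝ := fun r => ∫ t in (0:ℝ)..r, I1 t with hG
  have hGpos : ∀ r : ℝ, 0 < r → 0 < G r := by
    intro r hr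
    apply intervalIntegral_pos_of_pos_on (hI1int 0 r le_rfl hr.le) _ hr
    intro x hx
    rw [hI1]
    have := Real.exp_pos (f x)
    have := hx.1
    positivity
  -- step 1 : integrated ODE
  have hgG : ∀ r : ℝ, 0 < r → r ^ (k+1) * |f' r| ^ k * f' r = -(K ^ (k+1) * G r) := by
    intro r hr
    set gfun : ℝ → ℝ := fun s => s ^ (k+1) * |f' s| ^ k * f' s with hgfun
    have hseg : ∀ ε : ℝ, 0 < ε → ε ≤ r → gfun ε + K ^ (k+1) * G ε = gfun r + K ^ (k+1) * G r := by
      intro ε hε hεr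
      have hint : ∀ x ∈ uIcc ε r, HasDerivAt gfun (-(K ^ (k+1) * I1 x)) x := by
        intro x hx
        have hx0 : 0 < x := by
          rcases Set.mem_uIcc.mp hx with h | h
          · exact lt_of_lt_of_le hε h.1
          · exact lt_of_lt_of_le hr h.1
        have := hodeK x hx0
        convert this using 1
        rw [hI1]; ring
      have hcont : IntervalIntegrable (fun x => -(K ^ (k+1) * I1 x)) volume ε r :=
        ((hI1int ε r hε.le (le_trans hε.le hεr)).const_mul _).neg
      have heq1 := integral_eq_sub_of_hasDerivAt hint hcont
      have heq2 : ∫ x in ε..r, -(K ^ (k+1) * I1 x) = -(K ^ (k+1) * (G r - G ε)) := by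
        rw [intervalIntegral.integral_neg, intervalIntegral.integral_const_mul]
        have := integral_interval_sub_left (hI1int 0 r le_rfl (le_trans hε.le hεr))
          (hI1int 0 ε le_rfl hε.le)
        rw [hG]
        rw [← this]
      rw [heq2] at heq1
      have : gfun r - gfun ε = -(K ^ (k+1) * (G r - G ε)) := heq1.symm
      linarith
    have hne : (nhdsWithin (0:ℝ) (Ioo 0 r)).NeBot := left_nhdsWithin_Ioo_neBot hr
    have h1 : Tendsto (fun ε => gfun ε + K ^ (k+1) * G ε) (nhdsWithin (0:ℝ) (Ioo 0 r)) (nhds 0) := by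
      have hψc : Continuous fun ε : ℝ => ε ^ (k+1) * |D ε| ^ k * D ε := by
        apply Continuous.mul
        apply Continuous.mul (continuous_pow _) ((hDc.abs).pow k)
        exact hDc
      have hψ0 : (fun ε : ℝ => ε ^ (k+1) * |D ε| ^ k * D ε) 0 = 0 := by
        simp
      have hψ : Tendsto (fun ε : ℝ => ε ^ (k+1) * |D ε| ^ k * D ε)
          (nhdsWithin (0:ℝ) (Ioo 0 r)) (nhds 0) := by
        have h := (hψc.tendsto 0).mono_left
          (nhdsWithin_le_nhds : nhdsWithin (0:ℝ) (Ioo 0 r) ≤ nhds 0)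
        simpa using h
      have hGc : ContinuousOn G (Icc 0 r) := by
        have : IntegrableOn I1 (uIcc 0 r) volume := by
          rw [uIcc_of_le hr.le]
          exact (hI1c.mono (fun x hx => hx.1)).integrableOn_Icc
        have := continuousOn_primitive_interval this
        rwa [uIcc_of_le hr.le] at this
      have hG0 : G 0 = 0 := intervalIntegral.integral_same
      have hGt : Tendsto G (nhdsWithin (0:ℝ) (Ioo 0 r)) (nhds 0) := by
        have hcw : ContinuousWithinAt G (Icc 0 r) 0 :=
          hGc.continuousWithinAt ⟨le_rfl, hr.le⟩
        have h := (hcw.mono (Ioo_subset_Icc_self : Ioo (0:ℝ) r ⊆ Icc 0 r)).tendsto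
        rwa [hG0] at h
      have hcomb := hψ.add (hGt.const_mul (K ^ (k+1)))
      simp only [mul_zero, add_zero] at hcomb
      apply hcomb.congr'
      filter_upwards [eventually_mem_nhdsWithin] with ε hε
      rw [hgfun]
      simp only
      rw [hDf' ε hε.1]
    have h2 : Tendsto (fun ε => gfun ε + K ^ (k+1) * G ε) (nhdsWithin (0:ℝ) (Ioo 0 r))
        (nhds (gfun r + K ^ (k+1) * G r)) := by
      apply tendsto_const_nhds.congr'
      filter_upwards [eventually_mem_nhdsWithin] with ε hε
      exact (hseg ε hε.1 hε.2.le).symm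
    have := tendsto_nhds_unique h2 h1
    have h3 : gfun r = -(K ^ (k+1) * G r) := by linarith
    exact h3
  -- step 2 : formula for D
  have hDkey : ∀ r : ℝ, 0 < r → D r = -(K * (G r) ^ p) / r := by
    intro r hr
    have h1 := hgG r hr
    have hGr := hGpos r hr
    have hKG : 0 < K ^ (k+1) * G r := by positivity
    have hf'neg : f' r < 0 := by
      by_contra hcon
      push_neg at hcon
      have habs : |f' r| = f' r := abs_of_nonneg hcon
      have hpos : 0 ≤ r ^ (k+1) * |f' r| ^ k * f' r := by
        rw [habs]; positivity
      rw [h1] at hpos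
      linarith
    have habs : |f' r| = -f' r := abs_of_neg hf'neg
    have h2 : (r * (-f' r)) ^ (k+1) = K ^ (k+1) * G r := by
      rw [mul_pow]
      have h3 : r ^ (k+1) * (-f' r) ^ (k+1) = -(r ^ (k+1) * |f' r| ^ k * f' r) := by
        rw [habs, pow_succ]; ring
      rw [h3, h1, neg_neg]
    have hfr0 : 0 < r * (-f' r) := mul_pos hr (by linarith)
    have h3 : r * (-f' r) = (K ^ (k+1) * G r) ^ p := by
      have h4 := congrArg (fun x : ℝ => x ^ p) h2
      rwa [← Real.rpow_natCast (r * (-f' r)) (k+1), ← Real.rpow_mul hfr0.le, hkp,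
        Real.rpow_one] at h4
    have h4 : (K ^ (k+1) * G r) ^ p = K * (G r) ^ p := by
      rw [Real.mul_rpow (by positivity) hGr.le]
      congr 1
      rw [← Real.rpow_natCast K (k+1), ← Real.rpow_mul hK0.le, hkp, Real.rpow_one]
    rw [hDf' r hr]
    rw [h4] at h3
    rw [eq_div_iff hr.ne']
    linarith
  -- F side
  set F : ℝ → ℝ := fun r => -N * Real.log (1 + c * r ^ q) with hF
  have hu1 : ∀ t : ℝ, 0 ≤ t → 1 ≤ 1 + c * t ^ q := by
    intro t ht
    have h1 : 0 ≤ t ^ q := Real.rpow_nonneg ht _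
    have h2 := mul_nonneg hc0.le h1
    linarith
  have hrpowq : Continuous (fun t : ℝ => t ^ q) := Real.continuous_rpow_const hq0.le
  have hFc : ContinuousOn F (Ici 0) := by
    apply ContinuousOn.mul continuousOn_const
    apply ContinuousOn.log
    · exact (continuous_const.add (continuous_const.mul hrpowq)).continuousOn
    · intro t ht
      have := hu1 t ht
      linarith
  have hF0 : F 0 = 0 := by
    rw [hF]
    simp [Real.zero_rpow hq0.ne']
  have hFle : ∀ r : ℝ, 0 ≤ r → F r ≤ 0 := by
    intro r hr
    rw [hF]
    simp only [neg_mul, neg_nonpos]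
    apply mul_nonneg hN0.le
    apply Real.log_nonneg (hu1 r hr)
  set I2 : ℝ → ℝ := fun t => t ^ (k+1) * Real.exp (F t) with hI2
  have hI2c : ContinuousOn I2 (Ici 0) :=
    (continuous_pow _).continuousOn.mul (Real.continuous_exp.comp_continuousOn hFc)
  have hI2int : ∀ a b : ℝ, 0 ≤ a → 0 ≤ b → IntervalIntegrable I2 volume a b := by
    intro a b ha hb
    apply (hI2c.mono ?_).intervalIntegrable
    intro x hx
    rcases Set.mem_uIcc.mp hx with h | h
    · exact le_trans ha h.1
    · exact le_trans hb h.1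
  set GF : ℝ → ℝ := fun r => ∫ t in (0:ℝ)..r, I2 t with hGF
  have hexpF : ∀ t : ℝ, 0 ≤ t → Real.exp (F t) = ((1 + c * t ^ q) ^ (k+2))⁻¹ := by
    intro t ht
    have hu0 : (0:ℝ) < 1 + c * t ^ q := lt_of_lt_of_le one_pos (hu1 t ht)
    rw [hF]
    simp only
    rw [neg_mul, Real.exp_neg]
    congr 1
    rw [← hNcast, Real.exp_nat_mul, Real.exp_log hu0]
  set HF : ℝ → ℝ := fun t => t ^ (k+2) / (N * (1 + c * t ^ q) ^ (k+1)) with hHF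
  have hHFc : ContinuousOn HF (Ici 0) := by
    apply ContinuousOn.div
    · exact (continuous_pow _).continuousOn
    · exact (continuous_const.mul
        ((continuous_const.add (continuous_const.mul hrpowq)).pow _)).continuousOn
    · intro t htm
      have h3 : (0:ℝ) < 1 + c * t ^ q := lt_of_lt_of_le one_pos (hu1 t htm)
      positivity
  have hHFder : ∀ t : ℝ, 0 < t → HasDerivAt HF (I2 t) t := by
    intro t ht
    have hu0 : (0:ℝ) < 1 + c * t ^ q := lt_of_lt_of_le one_pos (hu1 t ht.le)
    have hderu : HasDerivAt (fun s : ℝ => 1 + c * s ^ q) (c * (q * t ^ (q-1))) t :=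
      ((Real.hasDerivAt_rpow_const (Or.inl ht.ne')).const_mul c).const_add 1
    have hdenom := (hderu.pow (k+1)).const_mul N
    have hnum := hasDerivAt_pow (k+2) t
    have hden0 : N * (1 + c * t ^ q) ^ (k+1) ≠ 0 := by positivity
    have hdd := hnum.div hdenom hden0
    rw [hHF]
    refine hdd.congr_deriv ?_; symm
    rw [hI2]
    simp only [Nat.add_sub_cancel, Pi.pow_apply]
    rw [hexpF t ht.le]
    have htq : t ^ (q-1) = t ^ q / t := by
      rw [eq_div_iff ht.ne', ← Real.rpow_add_one ht.ne' (q-1)]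
      norm_num
    rw [htq, hq, hN]
    have hu0' : (1:ℝ) + c * t ^ q ≠ 0 := hu0.ne'
    have hNe : (k:ℝ) + 1 ≠ 0 := by positivity
    have htne : t ≠ 0 := ht.ne'
    push_cast
    field_simp
    ring
  have hGFval : ∀ r : ℝ, 0 ≤ r → GF r = r ^ (k+2) / (N * (1 + c * r ^ q) ^ (k+1)) := by
    intro r hr
    have hHF0 : HF 0 = 0 := by
      rw [hHF]
      simp
    have key := integral_eq_sub_of_hasDeriv_right_of_le hr (hHFc.mono (fun x hx => hx.1))
      (fun x hx => (hHFder x hx.1).hasDerivWithinAt) (hI2int 0 r le_rfl hr)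
    rw [hGF]
    simp only
    rw [key, hHF0, sub_zero, hHF]
  set DF : ℝ → ℝ := fun t => -(N * c * q) * t ^ p / (1 + c * t ^ q) with hDF
  have hDFc : ContinuousOn DF (Ici 0) := by
    apply ContinuousOn.div
    · exact (continuous_const.mul (Real.continuous_rpow_const hp0.le)).continuousOn
    · exact (continuous_const.add (continuous_const.mul hrpowq)).continuousOn
    · intro t ht
      have := hu1 t ht
      linarith
  have hFD : ∀ t : ℝ, 0 < t → HasDerivAt F (DF t) t := by
    intro t ht
    have hu0 : (0:ℝ) < 1 + c * t ^ q := lt_of_lt_of_le one_pos (hu1 t ht.le)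
    have hderu : HasDerivAt (fun s : ℝ => 1 + c * s ^ q) (c * (q * t ^ (q-1))) t :=
      ((Real.hasDerivAt_rpow_const (Or.inl ht.ne')).const_mul c).const_add 1
    have hd := (hderu.log hu0.ne').const_mul (-N)
    have heq : -N * (c * (q * t ^ (q-1)) / (1 + c * t ^ q)) = DF t := by
      rw [hDF]
      simp only
      rw [hqp]
      ring
    rw [hF, ← heq]
    exact hd
  have hDFkey : ∀ t : ℝ, 0 < t → DF t = -(K * (GF t) ^ p) / t := by
    intro t ht
    have hu0 : (0:ℝ) < 1 + c * t ^ q := lt_of_lt_of_le one_pos (hu1 t ht.le)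
    rw [hGFval t ht.le]
    have h1 : (t ^ (k+2) / (N * (1 + c * t ^ q) ^ (k+1))) ^ p
        = t ^ q / (N ^ p * (1 + c * t ^ q)) := by
      rw [Real.div_rpow (by positivity) (by positivity),
        Real.mul_rpow hN0.le (by positivity)]
      congr 1
      · rw [← Real.rpow_natCast t (k+2), ← Real.rpow_mul ht.le]
        congr 1
        rw [← hqnp, hN]
        push_cast
        ring
      · congr 1
        rw [← Real.rpow_natCast _ (k+1), ← Real.rpow_mul hu0.le, hkp, Real.rpow_one]
    rw [h1, hDF]
    simp only
    have ht2 : t ^ q = t ^ p * t := by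
      nth_rewrite 1 [show q = (q-1)+1 by ring]
      rw [Real.rpow_add_one ht.ne', hqp]
    rw [hconst, ht2]
    have hu0' : (1:ℝ) + c * t ^ q ≠ 0 := hu0.ne'
    have htne : t ≠ 0 := ht.ne'
    have hNp' : N ^ p ≠ 0 := hNp0.ne'
    field_simp
  -- FTC identities
  have hfFTC : ∀ a s : ℝ, 0 ≤ a → a ≤ s → f s - f a = ∫ t in a..s, D t := by
    intro a s ha has
    rw [eq_comm]
    apply integral_eq_sub_of_hasDeriv_right_of_le has
    · exact hfc.mono (fun x hx => le_trans ha hx.1)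
    · intro x hx
      exact (hfD x (lt_of_le_of_lt ha hx.1)).hasDerivWithinAt
    · exact hDc.intervalIntegrable a s
  have hFFTC : ∀ a s : ℝ, 0 ≤ a → a ≤ s → F s - F a = ∫ t in a..s, DF t := by
    intro a s ha has
    rw [eq_comm]
    apply integral_eq_sub_of_hasDeriv_right_of_le has
    · exact hFc.mono (fun x hx => le_trans ha hx.1)
    · intro x hx
      exact (hFD x (lt_of_le_of_lt ha hx.1)).hasDerivWithinAt
    · apply (hDFc.mono ?_).intervalIntegrable
      rw [uIcc_of_le has]
      intro x hx
      exact le_trans ha hx.1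
  -- main comparison
  have hpow : ∀ (C t : ℝ), ∫ u in (0:ℝ)..t, C * u ^ (k+1) = C * t^(k+2) / N := by
    intro C t
    rw [intervalIntegral.integral_const_mul, integral_pow, hN]
    push_cast
    norm_num
    ring
  have hMain : ∀ b : ℝ, 0 ≤ b → ∀ r ∈ Icc (0:ℝ) b, f r = F r := by
    intro b hb
    rcases hb.eq_or_lt with hbe | hb0
    · intro r hr
      have : r = 0 := le_antisymm (hbe ▸ hr.2) hr.1
      rw [this, h0, hF0]
    · obtain ⟨t1, ht1, hmin1⟩ := isCompact_Icc.exists_isMinOn (nonempty_Icc.mpr hb)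
        (hfc.mono (fun x hx => hx.1))
      obtain ⟨t2, ht2, hmin2⟩ := isCompact_Icc.exists_isMinOn (nonempty_Icc.mpr hb)
        (hFc.mono (fun x hx => hx.1))
      set m : ℝ := min (Real.exp (f t1)) (Real.exp (F t2)) with hm
      have hm0 : 0 < m := lt_min (Real.exp_pos _) (Real.exp_pos _)
      have hmf : ∀ t ∈ Icc (0:ℝ) b, m ≤ Real.exp (f t) := fun t ht =>
        le_trans (min_le_left _ _) (Real.exp_le_exp.mpr (hmin1 ht))
      have hmF : ∀ t ∈ Icc (0:ℝ) b, m ≤ Real.exp (F t) := fun t ht =>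
        le_trans (min_le_right _ _) (Real.exp_le_exp.mpr (hmin2 ht))
      have hGlow : ∀ t ∈ Icc (0:ℝ) b, m * t^(k+2) / N ≤ G t := by
        intro t ht
        have hmono : ∫ u in (0:ℝ)..t, m * u^(k+1) ≤ ∫ u in (0:ℝ)..t, I1 u := by
          apply intervalIntegral.integral_mono_on ht.1
          · exact (continuous_const.mul (continuous_pow _)).intervalIntegrable _ _
          · exact hI1int 0 t le_rfl ht.1
          · intro u hu
            rw [hI1]
            simp only
            have h5 := hmf u ⟨hu.1, le_trans hu.2 ht.2⟩
            have h6 : (0:ℝ) ≤ u^(k+1) := pow_nonneg hu.1 _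
            calc m * u^(k+1) = u^(k+1) * m := by ring
              _ ≤ u^(k+1) * Real.exp (f u) := mul_le_mul_of_nonneg_left h5 h6
        rwa [hpow m t] at hmono
      have hGFlow : ∀ t ∈ Icc (0:ℝ) b, m * t^(k+2) / N ≤ GF t := by
        intro t ht
        have hmono : ∫ u in (0:ℝ)..t, m * u^(k+1) ≤ ∫ u in (0:ℝ)..t, I2 u := by
          apply intervalIntegral.integral_mono_on ht.1
          · exact (continuous_const.mul (continuous_pow _)).intervalIntegrable _ _
          · exact hI2int 0 t le_rfl ht.1
          · intro u hu
            rw [hI2]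
            simp only
            have h5 := hmF u ⟨hu.1, le_trans hu.2 ht.2⟩
            have h6 : (0:ℝ) ≤ u^(k+1) := pow_nonneg hu.1 _
            calc m * u^(k+1) = u^(k+1) * m := by ring
              _ ≤ u^(k+1) * Real.exp (F u) := mul_le_mul_of_nonneg_left h5 h6
        rwa [hpow m t] at hmono
      have hNp1 : (0:ℝ) < (m/N)^(p-1) := Real.rpow_pos_of_pos (by positivity) _
      have hbp : (0:ℝ) < b^p := Real.rpow_pos_of_pos hb0 _
      set C0 : ℝ := K * p * (m/N)^(p-1) * b^p / N with hC0
      have hC00 : 0 < C0 := by rw [hC0]; positivity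
      set δ : ℝ := 1/(C0+1) with hδ
      have hδ0 : 0 < δ := by rw [hδ]; positivity
      have hstep : ∀ a, 0 ≤ a → a < b → EqOn f F (Icc 0 a) →
          EqOn f F (Icc 0 (min b (a+δ))) := by
        intro a ha hab heq
        have has1 : a < min b (a+δ) := lt_min hab (by linarith)
        have hs1b : min b (a+δ) ≤ b := min_le_left _ _
        have hs10 : (0:ℝ) ≤ min b (a+δ) := le_trans ha has1.le
        have hcont : ContinuousOn (fun t => |f t - F t|) (Icc 0 (min b (a+δ))) :=
          ((hfc.mono (fun x hx => hx.1)).sub (hFc.mono (fun x hx => hx.1))).abs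
        obtain ⟨ts, hts, hmax'⟩ := isCompact_Icc.exists_isMaxOn (nonempty_Icc.mpr hs10) hcont
        set H := |f ts - F ts| with hH
        have hHub : ∀ t ∈ Icc (0:ℝ) (min b (a+δ)), |f t - F t| ≤ H := fun t ht => hmax' ht
        have hH0 : 0 ≤ H := abs_nonneg _
        rcases hH0.eq_or_lt with hHz | hHpos
        · intro t ht
          have h7 := hHub t ht
          rw [← hHz] at h7
          have h8 : |f t - F t| = 0 := le_antisymm h7 (abs_nonneg _)
          have h9 := abs_eq_zero.mp h8
          linarith
        · exfalso
          have htsa : a < ts := by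
            by_contra hcon
            push_neg at hcon
            have h9 : f ts = F ts := heq ⟨hts.1, hcon⟩
            rw [hH, h9, sub_self, abs_zero] at hHpos
            exact lt_irrefl 0 hHpos
          have hGdiff : ∀ t ∈ Icc (0:ℝ) (min b (a+δ)), |G t - GF t| ≤ H * t^(k+2) / N := by
            intro t ht
            have hsub : G t - GF t = ∫ u in (0:ℝ)..t, (I1 u - I2 u) := by
              rw [hG, hGF]
              simp only
              rw [intervalIntegral.integral_sub (hI1int 0 t le_rfl ht.1)
                (hI2int 0 t le_rfl ht.1)]
            rw [hsub]
            have hb1 : ‖∫ u in (0:ℝ)..t, (I1 u - I2 u)‖ ≤ |∫ u in (0:ℝ)..t, H * u^(k+1)| := by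
              apply intervalIntegral.norm_integral_le_abs_of_norm_le
              · apply (ae_restrict_iff' measurableSet_uIoc).mpr
                apply Filter.Eventually.of_forall
                intro u hu
                rw [uIoc_of_le ht.1] at hu
                have hu0' : (0:ℝ) ≤ u := hu.1.le
                have h10 := exp_lip (hfle u hu0') (hFle u hu0')
                have h11 := hHub u ⟨hu0', le_trans hu.2 ht.2⟩
                have h6 : (0:ℝ) ≤ u^(k+1) := pow_nonneg hu0' _
                have e2 : I1 u - I2 u = u^(k+1) * (Real.exp (f u) - Real.exp (F u)) := by
                  rw [hI1, hI2]; ring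
                rw [e2, Real.norm_eq_abs, abs_mul, abs_of_nonneg h6]
                calc u^(k+1) * |Real.exp (f u) - Real.exp (F u)|
                    ≤ u^(k+1) * |f u - F u| := mul_le_mul_of_nonneg_left h10 h6
                  _ ≤ u^(k+1) * H := mul_le_mul_of_nonneg_left h11 h6
                  _ = H * u^(k+1) := by ring
              · exact (continuous_const.mul (continuous_pow _)).intervalIntegrable _ _
            rw [Real.norm_eq_abs] at hb1
            have hval : |∫ u in (0:ℝ)..t, H * u^(k+1)| = H * t^(k+2) / N := by
              rw [hpow H t, abs_of_nonneg (div_nonneg (mul_nonneg hH0 (pow_nonneg ht.1 _)) hN0.le)]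
            calc |∫ u in (0:ℝ)..t, (I1 u - I2 u)| ≤ |∫ u in (0:ℝ)..t, H * u^(k+1)| := hb1
              _ = H * t^(k+2) / N := hval
          have hDdiff : ∀ t, a < t → t ≤ min b (a+δ) → |D t - DF t| ≤ C0 * H := by
            intro t hat hts1
            have ht0 : 0 < t := lt_of_le_of_lt ha hat
            have htb : t ≤ b := le_trans hts1 hs1b
            rw [hDkey t ht0, hDFkey t ht0]
            have hμ : (0:ℝ) < m * t^(k+2)/N := by positivity
            have hGl := hGlow t ⟨ht0.le, htb⟩
            have hGFl := hGFlow t ⟨ht0.le, htb⟩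
            have hlip := rpow_lip hp0 hp1 hμ hGl hGFl
            have hgd := hGdiff t ⟨ht0.le, hts1⟩
            have e3 : -(K * G t ^ p)/t - -(K * GF t ^ p)/t = (K/t) * (GF t ^ p - G t ^ p) := by
              ring
            rw [e3, abs_mul, abs_of_pos (div_pos hK0 ht0), abs_sub_comm]
            have hlipnn : (0:ℝ) ≤ p * (m * t^(k+2)/N) ^ (p-1) := by positivity
            have e5 : |G t ^ p - GF t ^ p| ≤ p * (m * t^(k+2)/N)^(p-1) * (H * t^(k+2)/N) :=
              le_trans hlip (mul_le_mul_of_nonneg_left hgd hlipnn)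
            have e7 : (m * t^(k+2)/N)^(p-1) = (m/N)^(p-1) * t ^ (N*(p-1)) := by
              rw [show m * t^(k+2)/N = (m/N) * t^(k+2) by ring,
                Real.mul_rpow (by positivity) (by positivity)]
              congr 1
              rw [← Real.rpow_natCast t (k+2), ← Real.rpow_mul ht0.le, hNcast, mul_comm]
            have e8 : t ^ (N*(p-1)) * t^(k+2) / t = t ^ p := by
              rw [div_eq_iff ht0.ne', ← Real.rpow_natCast t (k+2), hNcast,
                ← Real.rpow_add ht0, show N*(p-1) + N = N * p by ring, hqnp,
                show q = p + 1 by linarith [hqp], Real.rpow_add_one ht0.ne']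
            have htp : t ^ p ≤ b ^ p := Real.rpow_le_rpow ht0.le htb hp0.le
            calc (K/t) * |G t ^ p - GF t ^ p|
                ≤ (K/t) * (p * (m * t^(k+2)/N)^(p-1) * (H * t^(k+2)/N)) := by
                  apply mul_le_mul_of_nonneg_left e5 (by positivity)
              _ = K * p * (m/N)^(p-1) * (t ^ (N*(p-1)) * t^(k+2) / t) / N * H := by
                  rw [e7]; ring
              _ = K * p * (m/N)^(p-1) * t ^ p / N * H := by rw [e8]
              _ ≤ K * p * (m/N)^(p-1) * b ^ p / N * H := by gcongr
              _ = C0 * H := by rw [hC0]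
          have hfa : f a = F a := heq ⟨ha, le_rfl⟩
          have h1 := hfFTC a ts ha htsa.le
          have h2 := hFFTC a ts ha htsa.le
          have hDFint : IntervalIntegrable DF volume a ts := by
            apply (hDFc.mono ?_).intervalIntegrable
            rw [uIcc_of_le htsa.le]
            intro x hx
            exact le_trans ha hx.1
          have hsub2 : f ts - F ts = ∫ t in a..ts, (D t - DF t) := by
            rw [intervalIntegral.integral_sub (hDc.intervalIntegrable _ _) hDFint,
              ← h1, ← h2, hfa]
            ring
          have hnorm := intervalIntegral.norm_integral_le_of_norm_le_const
            (a := a) (b := ts) (C := C0 * H) (f := fun t => D t - DF t) ?_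
          swap
          · intro x hx
            rw [uIoc_of_le htsa.le] at hx
            rw [Real.norm_eq_abs]
            exact hDdiff x hx.1 (le_trans hx.2 hts.2)
          have habs2 : |ts - a| = ts - a := abs_of_pos (by linarith)
          have hH' : H ≤ C0 * H * (ts - a) := by
            calc H = |f ts - F ts| := hH
              _ = ‖∫ t in a..ts, (D t - DF t)‖ := by rw [hsub2, Real.norm_eq_abs]
              _ ≤ C0 * H * |ts - a| := hnorm
              _ = C0 * H * (ts - a) := by rw [habs2]
          have hts_a : ts - a ≤ δ := by
            have h12 : ts ≤ min b (a+δ) := hts.2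
            have h13 : min b (a+δ) ≤ a + δ := min_le_right _ _
            linarith
          have hC0δ : C0 * δ < 1 := by
            rw [hδ, mul_one_div, div_lt_one (by positivity)]
            linarith
          have hA : C0 * H * (ts - a) ≤ C0 * H * δ :=
            mul_le_mul_of_nonneg_left hts_a (by positivity)
          have hB : C0 * δ * H < 1 * H := mul_lt_mul_of_pos_right hC0δ hHpos
          have hC : C0 * H * δ = C0 * δ * H := by ring
          linarith
      -- continuation via sSup
      set S : Set ℝ := {r : ℝ | r ∈ Icc (0:ℝ) b ∧ EqOn f F (Icc 0 r)} with hS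
      have h0S : (0:ℝ) ∈ S := by
        constructor
        · exact ⟨le_rfl, hb⟩
        · intro t ht
          have : t = 0 := le_antisymm ht.2 ht.1
          rw [this, h0, hF0]
      have hbdd : BddAbove S := ⟨b, fun r hr => hr.1.2⟩
      have hSne : S.Nonempty := ⟨0, h0S⟩
      set r0 := sSup S with hr0
      have hr00 : 0 ≤ r0 := le_csSup hbdd h0S
      have hr0b : r0 ≤ b := csSup_le hSne (fun r hr => hr.1.2)
      have hltS : ∀ t, 0 ≤ t → t < r0 → f t = F t := by
        intro t ht htr
        obtain ⟨s', hs'S, hts'⟩ := exists_lt_of_lt_csSup hSne htr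
        exact hs'S.2 ⟨ht, hts'.le⟩
      have hEqr0 : EqOn f F (Icc 0 r0) := by
        intro t ht
        rcases ht.2.eq_or_lt with hte | htlt
        swap
        · exact hltS t ht.1 htlt
        · rcases hr00.eq_or_lt with hz | hz
          · rw [hte, ← hz, h0, hF0]
          · have hne2 : (nhdsWithin r0 (Ioo 0 r0)).NeBot := right_nhdsWithin_Ioo_neBot hz
            have hfw : Tendsto f (nhdsWithin r0 (Ioo 0 r0)) (nhds (f r0)) :=
              (hfD r0 hz).continuousAt.continuousWithinAt
            have hFw : Tendsto F (nhdsWithin r0 (Ioo 0 r0)) (nhds (F r0)) :=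
              (hFc r0 hz.le).mono (fun x hx => hx.1.le)
            have hcongr : Tendsto F (nhdsWithin r0 (Ioo 0 r0)) (nhds (f r0)) := by
              apply hfw.congr'
              filter_upwards [eventually_mem_nhdsWithin] with u hu
              exact hltS u hu.1.le hu.2
            rw [hte]
            exact tendsto_nhds_unique hcongr hFw
      rcases hr0b.eq_or_lt with he | hlt2
      · intro r hr
        exact hEqr0 ⟨hr.1, he ▸ hr.2⟩
      · exfalso
        have hst := hstep r0 hr00 hlt2 hEqr0
        have h15 : r0 < min b (r0+δ) := lt_min hlt2 (by linarith)
        have hmm : min b (r0 + δ) ∈ S :=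
          ⟨⟨le_trans hr00 h15.le, min_le_left _ _⟩, hst⟩
        have h14 : min b (r0+δ) ≤ r0 := le_csSup hbdd hmm
        linarith
  -- conclusion
  intro x
  rw [hw]
  have hx0 : (0:ℝ) ≤ ‖x‖ := norm_nonneg x
  have := hMain ‖x‖ hx0 ‖x‖ ⟨hx0, le_rfl⟩
  rw [this, hF]
  rw [hNcast]
  have hq' : N / (N - 1) = q := by rw [hq, hN]; congr 1; ring
  rw [hq']
end
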